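/- Let E be the Montgomery curve By² = x(x² + Ax + 1) over F_p. For points P, Q on E with S = P + Q and D = P − Q, the projective identity (X^S X^D : X^S Z^D + Z^S X^D : Z^S Z^D) = (B_XX : 2 B_XZ : B_ZZ) holds, where B_XX = (X^P X^Q − Z^P Z^Q)², B_XZ = (X^P X^Q + Z^P Z^Q)(X^P Z^Q + Z^P X^Q) + 2A X^P Z^P X^Q Z^Q, and B_ZZ = (X^P Z^Q − Z^P X^Q)², including the degenerate cases ±P = ±Q, ±P = ±0, and ±Q = ±0. -/

import Mathlib

set_option maxHeartbeats 2000000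

open WeierstrassCurve.Affine WeierstrassCurve.Affine.Point

/-- The `x`-only quotient map `E → P¹` for a point on the Montgomery curve
`By² = x(x² + Ax + 1)` given via its scaled Weierstrass model
`v² = u³ + (A/B)u² + (1/B²)u` (so `x_Montgomery = B·u`): `(X : Y : Z) ↦ (X : Z)` if
`Z ≠ 0` and `(1 : 0)` otherwise, with canonical representatives. -/
def montXLine {F : Type*} [Field F] (B : F) {W : WeierstrassCurve.Affine F} :
    W.Point → F × F
  | .zero => (1, 0)
  | .some (x := x) _ _ => (B * x, 1)

lemma montXLine_zero {F : Type*} [Field F] (B : F) {W : WeierstrassCurve.Affine F} :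
    montXLine B (0 : W.Point) = (1, 0) := rfl

lemma montXLine_some {F : Type*} [Field F] (B : F) {W : WeierstrassCurve.Affine F}
    {x y : F} (h : W.Nonsingular x y) : montXLine B (Point.some _ _ h) = (B * x, 1) := rfl

lemma montXLine_neg {F : Type*} [Field F] (B : F) {W : WeierstrassCurve.Affine F}
    (P : W.Point) : montXLine B (-P) = montXLine B P := by
  cases P <;> rfl

/-- the projective identity
`(X^S X^D : X^S Z^D + Z^S X^D : Z^S Z^D) = (B_XX : 2B_XZ : B_ZZ)` for `S = P + Q`,
`D = P − Q`, including all degenerate cases. -/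
theorem montgomery_biquadratic_identity {p : ℕ} [Fact p.Prime] (hp : 3 < p)
    (A B : ZMod p) (hA : A ^ 2 ≠ 4) (hB : B ≠ 0)
    (W : WeierstrassCurve.Affine (ZMod p))
    (hW : W = { a₁ := 0, a₂ := A / B, a₃ := 0, a₄ := 1 / B ^ 2, a₆ := 0 })
    (P Q : W.Point)
    (XP ZP XQ ZQ XS ZS XD ZD BXX BXZ BZZ : ZMod p)
    (hP : (XP, ZP) = montXLine B P) (hQ : (XQ, ZQ) = montXLine B Q)
    (hS : (XS, ZS) = montXLine B (P + Q)) (hD : (XD, ZD) = montXLine B (P - Q))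
    (hBXX : BXX = (XP * XQ - ZP * ZQ) ^ 2)
    (hBXZ : BXZ = (XP * XQ + ZP * ZQ) * (XP * ZQ + ZP * XQ) + 2 * A * XP * ZP * XQ * ZQ)
    (hBZZ : BZZ = (XP * ZQ - ZP * XQ) ^ 2) :
    ∃ lam : ZMod p, lam ≠ 0 ∧
      XS * XD = lam * BXX ∧
      XS * ZD + ZS * XD = lam * (2 * BXZ) ∧
      ZS * ZD = lam * BZZ := by
  subst hBXX hBXZ hBZZ
  have h2 : (2 : ZMod p) ≠ 0 := by
    have := Fact.out (p := p.Prime)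
    intro h
    have h2' : ((2 : ℕ) : ZMod p) = 0 := by exact_mod_cast h
    rw [ZMod.natCast_eq_zero_iff] at h2'
    exact absurd (Nat.le_of_dvd (by norm_num) h2') (by omega)
  have h4 : (4 : ZMod p) ≠ 0 := by
    intro h
    apply h2
    have h' : (2 : ZMod p) * 2 = 0 := by linear_combination h
    rcases mul_eq_zero.mp h' with h'' | h'' <;> exact h''
  cases P with
  | zero =>
    rw [← zero_def] at hP hS hD
    rw [zero_add] at hS
    rw [zero_sub, montXLine_neg] at hD
    rw [montXLine_zero, Prod.mk.injEq] at hP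
    obtain ⟨hXP, hZP⟩ := hP
    rw [← hQ, Prod.mk.injEq] at hS hD
    obtain ⟨hXS, hZS⟩ := hS
    obtain ⟨hXD, hZD⟩ := hD
    refine ⟨1, one_ne_zero, ?_, ?_, ?_⟩ <;> subst hXP hZP hXS hZS hXD hZD <;> ring
  | @some x₁ y₁ h₁ =>
    cases Q with
    | zero =>
      rw [← zero_def] at hQ hS hD
      rw [add_zero] at hS
      rw [sub_zero] at hD
      rw [montXLine_zero, Prod.mk.injEq] at hQ
      obtain ⟨hXQ, hZQ⟩ := hQ
      rw [← hP, Prod.mk.injEq] at hS hD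
      obtain ⟨hXS, hZS⟩ := hS
      obtain ⟨hXD, hZD⟩ := hD
      refine ⟨1, one_ne_zero, ?_, ?_, ?_⟩ <;> subst hXQ hZQ hXS hZS hXD hZD <;> ring
    | @some x₂ y₂ h₂ =>
      rw [montXLine_some, Prod.mk.injEq] at hP hQ
      obtain ⟨hXP, hZP⟩ := hP
      obtain ⟨hXQ, hZQ⟩ := hQ
      subst hXP hZP hXQ hZQ
      -- curve equations in Montgomery-cleared form
      have e₁ := (W.equation_iff x₁ y₁).mp h₁.1
      have e₂ := (W.equation_iff x₂ y₂).mp h₂.1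
      rw [hW] at e₁ e₂
      simp only at e₁ e₂
      have E₁ : B ^ 3 * y₁ ^ 2 = B ^ 3 * x₁ ^ 3 + A * B ^ 2 * x₁ ^ 2 + B * x₁ := by
        field_simp at e₁ ⊢
        linear_combination e₁
      have E₂ : B ^ 3 * y₂ ^ 2 = B ^ 3 * x₂ ^ 3 + A * B ^ 2 * x₂ ^ 2 + B * x₂ := by
        field_simp at e₂ ⊢
        linear_combination e₂
      have hnegY : ∀ y : ZMod p, ∀ x : ZMod p, W.negY x y = -y := by
        intro y x; rw [hW]; simp [negY]
      have ha₁ : W.a₁ = 0 := by rw [hW]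
      have ha₂ : W.a₂ = A / B := by rw [hW]
      have ha₃ : W.a₃ = 0 := by rw [hW]
      have ha₄ : W.a₄ = 1 / B ^ 2 := by rw [hW]
      -- 2-torsion nonvanishing lemma
      have tors : ∀ x : ZMod p, B ^ 3 * x ^ 3 + A * B ^ 2 * x ^ 2 + B * x = 0 →
          B * x * (B * x) - 1 * 1 ≠ 0 := by
        intro x hx h0
        have hx1 : (B * x) ^ 2 = 1 := by linear_combination h0
        have hxne : B * x ≠ 0 := by
          intro h
          rw [h] at hx1
          simp at hx1
        have hq : (B * x) * ((B * x) ^ 2 + A * (B * x) + 1) = 0 := by linear_combination hx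
        have hq2 : (B * x) ^ 2 + A * (B * x) + 1 = 0 := by
          rcases mul_eq_zero.mp hq with h | h
          · exact absurd h hxne
          · exact h
        apply hA
        have : A * (B * x) = -2 := by linear_combination hq2 - hx1
        calc A ^ 2 = (A * (B * x)) ^ 2 := by rw [mul_pow, hx1, mul_one]
        _ = 4 := by rw [this]; ring
      by_cases hx : x₁ = x₂
      · subst hx
        by_cases hy : y₁ = W.negY x₁ y₂
        · -- S = 0
          rw [add_of_Y_eq rfl hy] at hS
          rw [montXLine_zero, Prod.mk.injEq] at hS
          obtain ⟨hXS, hZS⟩ := hS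
          subst hXS hZS
          rw [hnegY] at hy
          by_cases hy0 : y₁ = 0
          · -- D = 0 as well (2-torsion)
            have hy2 : y₂ = 0 := by linear_combination hy - hy0
            rw [sub_eq_add_neg, neg_some, add_of_Y_eq rfl (by rw [negY_negY, hy0, hy2])] at hD
            rw [montXLine_zero, Prod.mk.injEq] at hD
            obtain ⟨hXD, hZD⟩ := hD
            subst hXD hZD
            have hE0 : B ^ 3 * x₁ ^ 3 + A * B ^ 2 * x₁ ^ 2 + B * x₁ = 0 := by
              rw [hy0] at E₁; linear_combination -E₁
            refine ⟨((B * x₁ * (B * x₁) - 1 * 1) ^ 2)⁻¹,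
              inv_ne_zero (pow_ne_zero _ (tors x₁ hE0)), ?_, ?_, ?_⟩
            · rw [inv_mul_cancel₀ (pow_ne_zero _ (tors x₁ hE0))]; ring
            · have hBXZ0 : (B * x₁ * (B * x₁) + 1 * 1) * (B * x₁ * 1 + 1 * (B * x₁)) +
                  2 * A * (B * x₁) * 1 * (B * x₁) * 1 = 0 := by linear_combination 2 * hE0
              rw [hBXZ0]; ring
            · ring
          · -- D = 2P (doubling), S = 0
            have hy2 : y₂ = -y₁ := by linear_combination hy
            subst hy2
            have hyne : y₁ ≠ W.negY x₁ (W.negY x₁ (-y₁)) := by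
              rw [negY_negY]
              intro h
              apply hy0
              have : 2 * y₁ = 0 := by linear_combination h
              rcases mul_eq_zero.mp this with h' | h'
              · exact absurd h' h2
              · exact h'
            rw [sub_eq_add_neg, neg_some, add_of_Y_ne hyne] at hD
            rw [montXLine_some, Prod.mk.injEq] at hD
            obtain ⟨hXD, hZD⟩ := hD
            subst hXD hZD
            have hsl : W.slope x₁ x₁ y₁ (W.negY x₁ (-y₁)) =
                (3 * x₁ ^ 2 + 2 * (A / B) * x₁ + 1 / B ^ 2) / (2 * y₁) := by
              rw [slope_of_Y_ne rfl hyne, hnegY, ha₁, ha₂, ha₄]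
              ring_nf
            rw [hsl]
            simp only [addX, ha₁, ha₂, ha₄]
            have hlam : 4 * B ^ 3 * y₁ ^ 2 ≠ 0 :=
              mul_ne_zero (mul_ne_zero h4 (pow_ne_zero _ hB)) (pow_ne_zero _ hy0)
            refine ⟨(4 * B ^ 3 * y₁ ^ 2)⁻¹, inv_ne_zero hlam, ?_, ?_, ?_⟩
            · field_simp [hy0, h2, hB, mul_ne_zero h2 hy0]
              linear_combination ((-16) * A - 32 * B * x₁) * E₁
            · field_simp [hy0, h2, hB, mul_ne_zero h2 hy0]
              linear_combination (16 : ZMod p) * E₁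
            · field_simp [hy0, h2, hB, mul_ne_zero h2 hy0]
              ring
        · -- y₁ = y₂, S = 2P, D = 0
          have hyy : y₁ = y₂ := Y_eq_of_Y_ne h₁.1 h₂.1 rfl hy
          subst hyy
          have hy0 : y₁ ≠ 0 := by
            intro h
            apply hy
            rw [hnegY, h, _root_.neg_zero]
          rw [add_of_Y_ne hy] at hS
          rw [montXLine_some, Prod.mk.injEq] at hS
          obtain ⟨hXS, hZS⟩ := hS
          subst hXS hZS
          rw [sub_eq_add_neg, neg_some, add_of_Y_eq rfl (W.negY_negY x₁ y₁).symm] at hD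
          rw [montXLine_zero, Prod.mk.injEq] at hD
          obtain ⟨hXD, hZD⟩ := hD
          subst hXD hZD
          have hsl : W.slope x₁ x₁ y₁ y₁ =
              (3 * x₁ ^ 2 + 2 * (A / B) * x₁ + 1 / B ^ 2) / (2 * y₁) := by
            rw [slope_of_Y_ne rfl hy, hnegY, ha₁, ha₂, ha₄]
            ring_nf
          rw [hsl]
          simp only [addX, ha₁, ha₂, ha₄]
          have hlam : 4 * B ^ 3 * y₁ ^ 2 ≠ 0 :=
            mul_ne_zero (mul_ne_zero h4 (pow_ne_zero _ hB)) (pow_ne_zero _ hy0)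
          refine ⟨(4 * B ^ 3 * y₁ ^ 2)⁻¹, inv_ne_zero hlam, ?_, ?_, ?_⟩
          · field_simp [hy0, h2, hB, mul_ne_zero h2 hy0]
            linear_combination ((-16) * A - 32 * B * x₁) * E₁
          · field_simp [hy0, h2, hB, mul_ne_zero h2 hy0]
            linear_combination (16 : ZMod p) * E₁
          · field_simp [hy0, h2, hB, mul_ne_zero h2 hy0]
            ring
      · -- generic case
        rw [add_of_X_ne hx] at hS
        rw [montXLine_some, Prod.mk.injEq] at hS
        obtain ⟨hXS, hZS⟩ := hS
        subst hXS hZS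
        rw [sub_eq_add_neg, neg_some, add_of_X_ne hx] at hD
        rw [montXLine_some, Prod.mk.injEq] at hD
        obtain ⟨hXD, hZD⟩ := hD
        subst hXD hZD
        simp only [slope_of_X_ne hx, hnegY, addX, ha₁, ha₂, ha₄] at *
        have hBx : B * x₁ - B * x₂ ≠ 0 := by
          intro h
          exact hx (mul_left_cancel₀ hB (by linear_combination h))
        refine ⟨(((B * x₁) * 1 - 1 * (B * x₂)) ^ 2)⁻¹,
          inv_ne_zero (pow_ne_zero _ (by simpa using hBx)), ?_, ?_, ?_⟩
        · field_simp [sub_ne_zero.mpr hx]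
          apply mul_left_cancel₀ (pow_ne_zero 2 hB)
          linear_combination ((B ^ 3 * (y₁ ^ 2 - y₂ ^ 2) + (B ^ 3 * x₁ ^ 3 + A * B ^ 2 * x₁ ^ 2 + B * x₁) - (B ^ 3 * x₂ ^ 3 + A * B ^ 2 * x₂ ^ 2 + B * x₂)) - 2 * B ^ 2 * (x₁ - x₂) ^ 2 * (A + B * (x₁ + x₂))) * E₁ + (-(B ^ 3 * (y₁ ^ 2 - y₂ ^ 2) + (B ^ 3 * x₁ ^ 3 + A * B ^ 2 * x₁ ^ 2 + B * x₁) - (B ^ 3 * x₂ ^ 3 + A * B ^ 2 * x₂ ^ 2 + B * x₂)) - 2 * B ^ 2 * (x₁ - x₂) ^ 2 * (A + B * (x₁ + x₂))) * E₂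
        · field_simp [sub_ne_zero.mpr hx]
          apply mul_left_cancel₀ hB
          linear_combination (2 : ZMod p) * E₁ + (2 : ZMod p) * E₂
        · field_simp [sub_ne_zero.mpr hx]
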